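/- Let $F$ be a field of characteristic not $2$, $a,b,c \in F^\times$, and $d \in F^\times$ such that $-abc$ is represented by the binary form $\langle 1,-d\rangle$. Then there is an isometry of quadratic forms over $F$: $\langle\langle a, b, d\rangle\rangle \cong \langle\langle d\rangle\rangle \otimes \langle\langle -ab, -ac\rangle\rangle$, where $\langle\langle \gamma_1,\dots,\gamma_m\rangle\rangle = \langle 1,-\gamma_1\rangle\otimes\cdots\otimes\langle 1,-\gamma_m\rangle$. -/

import Mathlib

open QuadraticMap

set_option maxHeartbeats 1000000 in
theorem pfister_decomposition {F : Type*} [Field F] (hF : ringChar F ≠ 2)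
    (a b c d : F) (ha : a ≠ 0) (hb : b ≠ 0) (hc : c ≠ 0) (hd : d ≠ 0)
    (hrep : ∃ x y : F, x ^ 2 - d * y ^ 2 = -(a * b * c)) :
    Equivalent
      (weightedSumSquares F
        ![1, -a, -b, a * b, -d, a * d, b * d, -(a * b * d)])
      (weightedSumSquares F
        ![1, a * b, a * c, (a * b) * (a * c),
          -d, -(d * (a * b)), -(d * (a * c)), -(d * ((a * b) * (a * c)))]) := by
  obtain ⟨x, y, hxy⟩ := hrep
  have e1 : (5:Fin 8) = (4:Fin 7).succ := rfl
  have e2 : (6:Fin 8) = (5:Fin 7).succ := rfl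
  have e3 : (7:Fin 8) = (6:Fin 7).succ := rfl
  have e4 : (5:Fin 7) = (4:Fin 6).succ := rfl
  have e5 : (6:Fin 7) = (5:Fin 6).succ := rfl
  have e6 : (5:Fin 6) = (4:Fin 5).succ := rfl
  have hadd : ∀ m₁ m₂ : Fin 8 → F, (fun m : Fin 8 → F =>
      ![m 0, m 3, (x * m 2 + d * y * m 6) / (a * c),
        (x * m 1 + d * y * m 5) / (a * b * c), m 4, m 7,
        (y * m 2 + x * m 6) / (a * c), (y * m 1 + x * m 5) / (a * b * c)]) (m₁ + m₂) = (fun m : Fin 8 → F =>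
      ![m 0, m 3, (x * m 2 + d * y * m 6) / (a * c),
        (x * m 1 + d * y * m 5) / (a * b * c), m 4, m 7,
        (y * m 2 + x * m 6) / (a * c), (y * m 1 + x * m 5) / (a * b * c)]) m₁ + (fun m : Fin 8 → F =>
      ![m 0, m 3, (x * m 2 + d * y * m 6) / (a * c),
        (x * m 1 + d * y * m 5) / (a * b * c), m 4, m 7,
        (y * m 2 + x * m 6) / (a * c), (y * m 1 + x * m 5) / (a * b * c)]) m₂ := by
    intro m₁ m₂
    funext i
    fin_cases i <;>
      simp [Matrix.cons_val_succ, e1, e2, e3, e4, e5, e6] <;> ring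
  have hsmul : ∀ (r : F) (m : Fin 8 → F), (fun m : Fin 8 → F =>
      ![m 0, m 3, (x * m 2 + d * y * m 6) / (a * c),
        (x * m 1 + d * y * m 5) / (a * b * c), m 4, m 7,
        (y * m 2 + x * m 6) / (a * c), (y * m 1 + x * m 5) / (a * b * c)]) (r • m) = r • (fun m : Fin 8 → F =>
      ![m 0, m 3, (x * m 2 + d * y * m 6) / (a * c),
        (x * m 1 + d * y * m 5) / (a * b * c), m 4, m 7,
        (y * m 2 + x * m 6) / (a * c), (y * m 1 + x * m 5) / (a * b * c)]) m := by
    intro r m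
    funext i
    fin_cases i <;>
      simp [Matrix.cons_val_succ, e1, e2, e3, e4, e5, e6] <;> ring
  have hleft : ∀ m : Fin 8 → F, (fun v : Fin 8 → F =>
      ![v 0, d * y * v 7 - x * v 3, (d * y * v 6 - x * v 2) / b, v 1, v 4,
        y * v 3 - x * v 7, (y * v 2 - x * v 6) / b, v 5]) ((fun m : Fin 8 → F =>
      ![m 0, m 3, (x * m 2 + d * y * m 6) / (a * c),
        (x * m 1 + d * y * m 5) / (a * b * c), m 4, m 7,
        (y * m 2 + x * m 6) / (a * c), (y * m 1 + x * m 5) / (a * b * c)]) m) = m := by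
    intro m
    funext i
    fin_cases i <;>
      simp [Matrix.cons_val_succ, e1, e2, e3, e4, e5, e6] <;>
      (try simp only [← e1, ← e2, ← e3, ← e4, ← e5, ← e6]) <;>
      field_simp <;>
      first
        | linear_combination (-(m 1)) * hxy
        | linear_combination (-(m 2)) * hxy
        | linear_combination (-(m 5)) * hxy
        | linear_combination (-(m 6)) * hxy
        | ring
  have hright : ∀ v : Fin 8 → F, (fun m : Fin 8 → F =>
      ![m 0, m 3, (x * m 2 + d * y * m 6) / (a * c),
        (x * m 1 + d * y * m 5) / (a * b * c), m 4, m 7,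
        (y * m 2 + x * m 6) / (a * c), (y * m 1 + x * m 5) / (a * b * c)]) ((fun v : Fin 8 → F =>
      ![v 0, d * y * v 7 - x * v 3, (d * y * v 6 - x * v 2) / b, v 1, v 4,
        y * v 3 - x * v 7, (y * v 2 - x * v 6) / b, v 5]) v) = v := by
    intro v
    funext i
    fin_cases i <;>
      simp [Matrix.cons_val_succ, e1, e2, e3, e4, e5, e6] <;>
      (try simp only [← e1, ← e2, ← e3, ← e4, ← e5, ← e6]) <;>
      field_simp <;>
      first
        | linear_combination (-(v 2)) * hxy
        | linear_combination (-(v 3)) * hxy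
        | linear_combination (-(v 6)) * hxy
        | linear_combination (-(v 7)) * hxy
        | ring
  have happ : ∀ m : Fin 8 → F,
      (weightedSumSquares F
        ![1, a * b, a * c, (a * b) * (a * c),
          -d, -(d * (a * b)), -(d * (a * c)), -(d * ((a * b) * (a * c)))]) ((fun m : Fin 8 → F =>
      ![m 0, m 3, (x * m 2 + d * y * m 6) / (a * c),
        (x * m 1 + d * y * m 5) / (a * b * c), m 4, m 7,
        (y * m 2 + x * m 6) / (a * c), (y * m 1 + x * m 5) / (a * b * c)]) m)
      = (weightedSumSquares F
        ![1, -a, -b, a * b, -d, a * d, b * d, -(a * b * d)]) m := by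
    intro m
    simp only [weightedSumSquares_apply, Fin.sum_univ_eight, smul_eq_mul,
      Matrix.cons_val_zero, Matrix.cons_val_one, Matrix.head_cons,
      Matrix.cons_val_two, Matrix.tail_cons, Matrix.cons_val_three,
      Matrix.cons_val_four, Matrix.cons_val_succ, e1, e2, e3, e4, e5, e6]
    simp only [← e1, ← e2, ← e3, ← e4, ← e5, ← e6]
    have H2 : a*c*(((x * m 2 + d * y * m 6) / (a * c)) * ((x * m 2 + d * y * m 6) / (a * c)))
        - d*(a*c)*(((y * m 2 + x * m 6) / (a * c)) * ((y * m 2 + x * m 6) / (a * c)))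
        = -(b*(m 2 * m 2)) + b*d*(m 6 * m 6) := by
      field_simp
      linear_combination (m 2 * m 2 - d * (m 6 * m 6)) * hxy
    have H3 : (a*b*(a*c))*(((x * m 1 + d * y * m 5) / (a * b * c)) *
          ((x * m 1 + d * y * m 5) / (a * b * c)))
        - d*(a*b*(a*c))*(((y * m 1 + x * m 5) / (a * b * c)) *
          ((y * m 1 + x * m 5) / (a * b * c)))
        = -(a*(m 1 * m 1)) + a*d*(m 5 * m 5) := by
      field_simp
      linear_combination (m 1 * m 1 - d * (m 5 * m 5)) * hxy
    linear_combination H2 + H3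
  exact ⟨{ toFun := (fun m : Fin 8 → F => ![m 0, m 3, (x * m 2 + d * y * m 6) / (a * c), (x * m 1 + d * y * m 5) / (a * b * c), m 4, m 7, (y * m 2 + x * m 6) / (a * c), (y * m 1 + x * m 5) / (a * b * c)]), invFun := (fun v : Fin 8 → F => ![v 0, d * y * v 7 - x * v 3, (d * y * v 6 - x * v 2) / b, v 1, v 4, y * v 3 - x * v 7, (y * v 2 - x * v 6) / b, v 5]), map_add' := hadd, map_smul' := hsmul, left_inv := hleft, right_inv := hright, map_app' := happ }⟩
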